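/- Let q, h, a : ℝ → E³ together with a twice continuously differentiable conical curvature κ : ℝ → ℝ be a Frenet frame of a ruled surface, with κ(s) ≠ 0 for all s, and let W(s) = κ(s)·q(s) + a(s) be the Darboux vector. If there is a fixed nonzero vector u ∈ E³ such that s ↦ ⟪W(s), u⟫ is constant, then for every s the determinant of the 3×3 matrix whose columns are the coordinates of W(s), W'(s) and W''(s) equals 0 (where W' and W'' denote the first and second derivatives of W). -/

import Mathlib

open RealInnerProductSpace Matrix

noncomputable section

abbrev E3 := EuclideanSpace ℝ (Fin 3)

/-- A Frenet frame of a ruled surface: `q`, `h`, `a` are orthonormal at every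
parameter and satisfy the Frenet equations with conical curvature `κ`. -/
def IsFrenetFrame (q h a : ℝ → E3) (κ : ℝ → ℝ) : Prop :=
  (∀ s, ⟪q s, q s⟫ = 1 ∧ ⟪h s, h s⟫ = 1 ∧ ⟪a s, a s⟫ = 1 ∧
        ⟪q s, h s⟫ = 0 ∧ ⟪q s, a s⟫ = 0 ∧ ⟪h s, a s⟫ = 0) ∧
  (∀ s, HasDerivAt q (h s) s) ∧
  (∀ s, HasDerivAt h (-q s + κ s • a s) s) ∧
  (∀ s, HasDerivAt a (-(κ s • h s)) s)

/-- The Darboux vector of the frame. -/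
def darboux (q a : ℝ → E3) (κ : ℝ → ℝ) : ℝ → E3 := fun s => κ s • q s + a s

theorem darboux_slant_det_zero
    (q h a : ℝ → E3) (κ : ℝ → ℝ)
    (hframe : IsFrenetFrame q h a κ)
    (hκC2 : ContDiff ℝ 2 κ)
    (hκne : ∀ s, κ s ≠ 0)
    (u : E3) (hu : u ≠ 0) (C : ℝ)
    (hW : ∀ s, ⟪darboux q a κ s, u⟫ = C) :
    ∀ s, Matrix.det (Matrix.of fun i j =>
      ![darboux q a κ s, deriv (darboux q a κ) s,
        deriv (deriv (darboux q a κ)) s] j i) = 0 := by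
  obtain ⟨horth, hq, hh, ha⟩ := hframe
  -- κ is differentiable
  have hκd : ∀ s, HasDerivAt κ (deriv κ s) s := fun s =>
    ((hκC2.differentiable (by norm_num)) s).hasDerivAt
  -- derivative of W
  have hWder : ∀ s, HasDerivAt (darboux q a κ) (deriv κ s • q s) s := by
    intro s
    have h1 := ((hκd s).smul (hq s)).add (ha s)
    have h2 : κ s • h s + deriv κ s • q s + -(κ s • h s) = deriv κ s • q s := by abel
    rw [h2] at h1
    exact h1
  -- derivative of inner products with u
  have hinner : ∀ (f : ℝ → E3) (f' : E3) (s : ℝ), HasDerivAt f f' s →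
      HasDerivAt (fun t => ⟪f t, u⟫) ⟪f', u⟫ s := by
    intro f f' s hf
    have := hf.inner ℝ (hasDerivAt_const s u)
    simpa using this
  -- the slant condition gives κ' ⟪q, u⟫ = 0 everywhere
  have hslant : ∀ s, deriv κ s * ⟪q s, u⟫ = 0 := by
    intro s
    have h1 := hinner _ _ s (hWder s)
    have h2 : HasDerivAt (fun t => ⟪darboux q a κ t, u⟫) 0 s := by
      have : (fun t => ⟪darboux q a κ t, u⟫) = fun _ => C := funext hW
      rw [this]; exact hasDerivAt_const s C
    have := h1.unique h2
    rwa [real_inner_smul_left] at this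
  -- main claim: deriv κ = 0 everywhere
  have hκ' : ∀ s, deriv κ s = 0 := by
    intro s₀
    by_contra hne
    -- open set where deriv κ ≠ 0
    have hcont : Continuous (deriv κ) := hκC2.continuous_deriv (by norm_num)
    have hU : IsOpen {s | deriv κ s ≠ 0} := isOpen_ne.preimage hcont
    have hmem : s₀ ∈ {s | deriv κ s ≠ 0} := hne
    have hqu : ∀ s ∈ {s | deriv κ s ≠ 0}, ⟪q s, u⟫ = 0 := by
      intro s hs
      have := hslant s
      exact (mul_eq_zero.mp this).resolve_left hs
    -- ⟪h s, u⟫ = 0 on U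
    have hhu : ∀ s ∈ {s | deriv κ s ≠ 0}, ⟪h s, u⟫ = 0 := by
      intro s hs
      have hder := hinner _ _ s (hq s)
      have hz : HasDerivAt (fun t => ⟪q t, u⟫) 0 s := by
        refine (hasDerivAt_const s (0:ℝ)).congr_of_eventuallyEq ?_
        filter_upwards [hU.mem_nhds hs] with t ht
        exact hqu t ht
      exact hder.unique hz
    -- ⟪a s₀, u⟫ = 0
    have hau : ⟪a s₀, u⟫ = 0 := by
      have hder := hinner _ _ s₀ (hh s₀)
      have hz : HasDerivAt (fun t => ⟪h t, u⟫) 0 s₀ := by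
        refine (hasDerivAt_const s₀ (0:ℝ)).congr_of_eventuallyEq ?_
        filter_upwards [hU.mem_nhds hmem] with t ht
        exact hhu t ht
      have := hder.unique hz
      rw [inner_add_left, inner_neg_left, hqu s₀ hmem, real_inner_smul_left] at this
      have h2 : κ s₀ * ⟪a s₀, u⟫ = 0 := by linarith
      exact (mul_eq_zero.mp h2).resolve_left (hκne s₀)
    -- q s₀, h s₀, a s₀ is an orthonormal basis, so u = 0
    set v : Fin 3 → E3 := ![q s₀, h s₀, a s₀] with hv
    obtain ⟨h1, h2, h3, h4, h5, h6⟩ := horth s₀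
    have h4' : ⟪h s₀, q s₀⟫ = 0 := by rw [real_inner_comm]; exact h4
    have h5' : ⟪a s₀, q s₀⟫ = 0 := by rw [real_inner_comm]; exact h5
    have h6' : ⟪a s₀, h s₀⟫ = 0 := by rw [real_inner_comm]; exact h6
    have honv : Orthonormal ℝ v := by
      rw [orthonormal_iff_ite]
      intro i j
      fin_cases i <;> fin_cases j <;>
        simp [v, h1, h2, h3, h4, h5, h6, h4', h5', h6'] <;> left <;>
        nlinarith [norm_nonneg (q s₀), norm_nonneg (h s₀), norm_nonneg (a s₀),
          real_inner_self_eq_norm_sq (q s₀), real_inner_self_eq_norm_sq (h s₀),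
          real_inner_self_eq_norm_sq (a s₀)]
    have hli : LinearIndependent ℝ v := honv.linearIndependent
    have hcard : Fintype.card (Fin 3) = Module.finrank ℝ E3 := by
      simp [finrank_euclideanSpace_fin]
    let b := basisOfLinearIndependentOfCardEqFinrank hli hcard
    have hb : ∀ i, b i = v i := fun i => congrFun (coe_basisOfLinearIndependentOfCardEqFinrank hli hcard) i
    have hvu : ∀ i, ⟪v i, u⟫ = 0 := by
      intro i
      fin_cases i
      · exact hqu s₀ hmem
      · exact hhu s₀ hmem
      · exact hau
    have hall : ∀ w : E3, ⟪w, u⟫ = 0 := by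
      intro w
      have hw : w ∈ Submodule.span ℝ (Set.range v) := by
        have := b.span_eq
        have hr : Set.range b = Set.range v := by
          ext x; constructor <;> rintro ⟨i, rfl⟩ <;> exact ⟨i, by rw [hb]⟩
        rw [hr] at this
        rw [this]; trivial
      induction hw using Submodule.span_induction with
      | mem x hx => obtain ⟨i, rfl⟩ := hx; exact hvu i
      | zero => simp
      | add x y _ _ hx hy => rw [inner_add_left, hx, hy]; ring
      | smul c x _ hx => rw [real_inner_smul_left, hx]; ring
    have : ⟪u, u⟫ = 0 := hall u
    exact hu (inner_self_eq_zero.mp this)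
  -- conclude: the middle column is zero
  intro s
  have hcol : deriv (darboux q a κ) s = 0 := by
    rw [(hWder s).deriv, hκ' s, zero_smul]
  apply Matrix.det_eq_zero_of_column_eq_zero 1
  intro i
  simp [hcol]
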